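/- Let n ≥ 1, let X, R ∈ ℂ^{n×n} with R(n−1,n−1) ≠ 0, and let m ≥ 4n−1. Let Y ∈ ℝ^{m×m} be the squared Fourier magnitude data Y(k1,k2) = |\widehat{[X,R]}(k1,k2)|², using the size m×m oversampled DFT of the composite signal [X,R] ∈ ℂ^{n×2n}. Then referenced deconvolution exactly recovers X from Y: vec(X) = T_R · vec(Y), where T_R = (1/m²)·M_R^{−1}·[(P2·F_RA*) ⊗ (P1·F_LA*)]. -/

import Mathlib

open Complex MeasureTheory ProbabilityTheory Matrix ComplexConjugate
open scoped Kronecker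

noncomputable section

/-- Zero-extension of a matrix to integer indices: out-of-range entries are `0`. -/
def zext {n1 n2 : ℕ} (X : Matrix (Fin n1) (Fin n2) ℂ) (t1 t2 : ℤ) : ℂ :=
  if h : 0 ≤ t1 ∧ t1 < (n1 : ℤ) ∧ 0 ≤ t2 ∧ t2 < (n2 : ℤ) then
    X ⟨t1.toNat, by omega⟩ ⟨t2.toNat, by omega⟩
  else 0

/-- Cross-correlation `C_{[X1,X2]}(s1,s2)`, with out-of-range terms taken as `0`. -/
def crossCorr {n1 n2 : ℕ} (X1 X2 : Matrix (Fin n1) (Fin n2) ℂ) (s1 s2 : ℤ) : ℂ :=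
  ∑ t1 : Fin n1, ∑ t2 : Fin n2,
    X1 t1 t2 * conj (zext X2 (((t1 : ℕ) : ℤ) - s1) (((t2 : ℕ) : ℤ) - s2))

/-- Autocorrelation `A_X = C_{[X,X]}`. -/
def autocorr {n1 n2 : ℕ} (X : Matrix (Fin n1) (Fin n2) ℂ) : ℤ → ℤ → ℂ :=
  crossCorr X X

/-- Horizontal concatenation `[X, R]` of two `n × n` matrices. -/
def hcat {n : ℕ} (X R : Matrix (Fin n) (Fin n) ℂ) : Matrix (Fin n) (Fin (2 * n)) ℂ :=
  Matrix.of fun t1 t2 =>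
    if h : (t2 : ℕ) < n then X t1 ⟨t2, h⟩ else R t1 ⟨(t2 : ℕ) - n, by omega⟩

/-- The size `m1 × m2` oversampled discrete Fourier transform of an `n1 × n2` signal. -/
def dft2 {n1 n2 : ℕ} (m1 m2 : ℕ) (Z : Matrix (Fin n1) (Fin n2) ℂ) (k1 k2 : ℕ) : ℂ :=
  ∑ t1 : Fin n1, ∑ t2 : Fin n2,
    Z t1 t2 * Complex.exp (-(2 * (Real.pi : ℂ) * Complex.I) *
      (((t1 : ℕ) : ℂ) * (k1 : ℂ) / (m1 : ℂ) + ((t2 : ℕ) : ℂ) * (k2 : ℂ) / (m2 : ℂ)))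

/-- Quadrant cross-correlation `C°_{[X,R]}(i,j) = C_{[X,R]}(i-(n-1), j-(n-1))`. -/
def quadCC {n : ℕ} (X R : Matrix (Fin n) (Fin n) ℂ) : Matrix (Fin n) (Fin n) ℂ :=
  Matrix.of fun i j =>
    crossCorr X R (((i : ℕ) : ℤ) - ((n : ℤ) - 1)) (((j : ℕ) : ℤ) - ((n : ℤ) - 1))

/-- Columnwise vectorization: the pair `(j, i)` (column `j`, row `i`) indexes entry `X i j`. -/
def vecM {a b : ℕ} (X : Matrix (Fin a) (Fin b) ℂ) : Fin b × Fin a → ℂ :=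
  fun p => X p.2 p.1

/-- The matrix `M_R` satisfying `vec (C°_{[X,R]}) = M_R • vec X` (columnwise vectorization). -/
def MR {n : ℕ} (R : Matrix (Fin n) (Fin n) ℂ) :
    Matrix (Fin n × Fin n) (Fin n × Fin n) ℂ :=
  Matrix.of fun p q =>
    conj (zext R (((q.2 : ℕ) : ℤ) - ((p.2 : ℕ) : ℤ) + ((n : ℤ) - 1))
      (((q.1 : ℕ) : ℤ) - ((p.1 : ℕ) : ℤ) + ((n : ℤ) - 1)))

/-- `P1 · F_LA^*`: row `t ∈ {0,…,n-1}` corresponds to the column `t - (n-1)` of `F_LA`. -/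
def P1FLA (n m : ℕ) : Matrix (Fin n) (Fin m) ℂ :=
  Matrix.of fun t k =>
    Complex.exp ((2 * (Real.pi : ℂ) * Complex.I) * ((k : ℕ) : ℂ) *
      (((t : ℕ) : ℂ) - ((n : ℂ) - 1)) / (m : ℂ))

/-- `P2 · F_RA^*`: row `t ∈ {0,…,n-1}` corresponds to the column `t - (2n-1)` of `F_RA`. -/
def P2FRA (n m : ℕ) : Matrix (Fin n) (Fin m) ℂ :=
  Matrix.of fun t k =>
    Complex.exp ((2 * (Real.pi : ℂ) * Complex.I) * ((k : ℕ) : ℂ) *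
      (((t : ℕ) : ℂ) - (2 * (n : ℂ) - 1)) / (m : ℂ))

/-- The referenced-deconvolution matrix
`T_R = (1/m²) · M_R⁻¹ · [(P2 F_RA^*) ⊗ (P1 F_LA^*)]`. -/
def TR {n : ℕ} (m : ℕ) (R : Matrix (Fin n) (Fin n) ℂ) :
    Matrix (Fin n × Fin n) (Fin m × Fin m) ℂ :=
  ((m : ℂ) ^ 2)⁻¹ • ((MR R)⁻¹ * (P2FRA n m ⊗ₖ P1FLA n m))

/-- The reference scaling factor: `S_R(k1,k2)` is the squared ℓ²-norm of the column of `T_R`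
indexed by the pair `(k1, k2)` (i.e. column `m·k1 + k2`). -/
def SR {n : ℕ} (m : ℕ) (R : Matrix (Fin n) (Fin n) ℂ) (k1 k2 : Fin m) : ℝ :=
  ∑ p : Fin n × Fin n, ‖TR m R p (k1, k2)‖ ^ 2

/-- Lower-triangular all-ones matrix `1_L`. -/
def oneL (n : ℕ) : Matrix (Fin n) (Fin n) ℂ :=
  Matrix.of fun i j => if j ≤ i then 1 else 0

/-- First-order difference matrix `D_n` (the inverse of `1_L`). -/
def Dmat (n : ℕ) : Matrix (Fin n) (Fin n) ℂ :=
  Matrix.of fun i j => if i = j then 1 else if (j : ℕ) + 1 = (i : ℕ) then -1 else 0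

/-- Pinhole reference. -/
def pinholeRef (n : ℕ) : Matrix (Fin n) (Fin n) ℂ :=
  Matrix.of fun t1 t2 => if (t1 : ℕ) = n - 1 ∧ (t2 : ℕ) = n - 1 then 1 else 0

/-- Slit reference. -/
def slitRef (n : ℕ) : Matrix (Fin n) (Fin n) ℂ :=
  Matrix.of fun _ t2 => if (t2 : ℕ) = n - 1 then 1 else 0

/-- Block reference. -/
def blockRef (n : ℕ) : Matrix (Fin n) (Fin n) ℂ :=
  Matrix.of fun _ _ => 1
def eC (m : ℕ) (s : ℤ) : ℂ := Complex.exp (2 * (Real.pi : ℂ) * Complex.I * (s : ℂ) / (m : ℂ))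

lemma eC_add (m : ℕ) (a b : ℤ) : eC m (a + b) = eC m a * eC m b := by
  rw [eC, eC, eC, ← Complex.exp_add]; congr 1; push_cast; ring

lemma eC_pow (m : ℕ) (k : ℕ) (s : ℤ) : eC m ((k : ℤ) * s) = eC m s ^ k := by
  rw [eC, eC, ← Complex.exp_nat_mul]; congr 1; push_cast; ring

lemma eC_zero (m : ℕ) : eC m 0 = 1 := by simp [eC]

lemma eC_conj (m : ℕ) (s : ℤ) : conj (eC m s) = eC m (-s) := by
  rw [eC, eC, ← Complex.exp_conj]
  congr 1
  simp only [map_div₀, _root_.map_mul, Complex.conj_I, map_intCast, map_natCast,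
    _root_.map_ofNat, Complex.conj_ofReal]
  push_cast
  ring

lemma eC_eq_one (m : ℕ) (hm : 0 < m) (s : ℤ) (hs : s.natAbs < m) (h : eC m s = 1) : s = 0 := by
  have hmc : (m : ℂ) ≠ 0 := Nat.cast_ne_zero.mpr hm.ne'
  rw [eC, Complex.exp_eq_one_iff] at h
  obtain ⟨k, hk⟩ := h
  have h2 : (2 : ℂ) * (Real.pi : ℂ) * Complex.I ≠ 0 := Complex.two_pi_I_ne_zero
  have : (s : ℂ) = (k : ℂ) * (m : ℂ) := by
    field_simp at hk
    linear_combination hk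
  have hz : s = k * (m : ℤ) := by exact_mod_cast this
  rcases eq_or_ne k 0 with h | h
  · simp [h] at hz; omega
  · exfalso
    have : m ≤ s.natAbs := by
      rw [hz, Int.natAbs_mul]
      have : 1 ≤ k.natAbs := by omega
      simp only [Int.natAbs_natCast]
      nlinarith
    omega

lemma sum_eC (m : ℕ) (hm : 0 < m) (s : ℤ) (hs : s.natAbs < m) :
    ∑ k : Fin m, eC m ((k : ℕ) * s) = if s = 0 then (m : ℂ) else 0 := by
  by_cases h0 : s = 0
  · simp [h0, eC_zero]
  · rw [if_neg h0]
    have hne : eC m s ≠ 1 := fun h => h0 (eC_eq_one m hm s hs h)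
    have hpow : eC m s ^ m = 1 := by
      rw [← eC_pow, eC]
      rw [show ((2:ℂ) * (Real.pi:ℂ) * Complex.I * (((m:ℤ) * s : ℤ) : ℂ) / (m:ℂ)) = (s : ℂ) * ((2:ℂ) * (Real.pi:ℂ) * Complex.I) by
        have hmc : (m : ℂ) ≠ 0 := Nat.cast_ne_zero.mpr hm.ne'
        push_cast; field_simp]
      exact Complex.exp_int_mul_two_pi_mul_I s
    calc ∑ k : Fin m, eC m ((k : ℕ) * s) = ∑ k ∈ Finset.range m, eC m s ^ k := by
          rw [← Fin.sum_univ_eq_sum_range (fun k => eC m s ^ k)]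
          exact Finset.sum_congr rfl fun k _ => eC_pow m k s
      _ = (eC m s ^ m - 1) / (eC m s - 1) := geom_sum_eq hne m
      _ = 0 := by rw [hpow]; simp
lemma zext_coe {n1 n2 : ℕ} (X : Matrix (Fin n1) (Fin n2) ℂ) (i : Fin n1) (j : Fin n2) :
    zext X (((i:ℕ):ℤ)) (((j:ℕ):ℤ)) = X i j := by
  rw [zext, dif_pos ⟨by positivity, by exact_mod_cast i.isLt, by positivity, by exact_mod_cast j.isLt⟩]
  congr <;> simp [Fin.ext_iff]

lemma zext_zero {n1 n2 : ℕ} (X : Matrix (Fin n1) (Fin n2) ℂ) (a b : ℤ)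
    (h : ¬(0 ≤ a ∧ a < (n1:ℤ) ∧ 0 ≤ b ∧ b < (n2:ℤ))) : zext X a b = 0 := dif_neg h

lemma zext_hcat_left {n : ℕ} (X R : Matrix (Fin n) (Fin n) ℂ) (a b : ℤ) (hb : b < (n:ℤ)) :
    zext (hcat X R) a b = zext X a b := by
  simp only [zext, hcat, Matrix.of_apply]
  split_ifs with h1 h2 h3 h4 <;> first
  | omega
  | rfl
  | (congr 1 <;> simp [Fin.ext_iff] <;> omega)

lemma zext_hcat_right {n : ℕ} (X R : Matrix (Fin n) (Fin n) ℂ) (a b : ℤ) (hb : (n:ℤ) ≤ b) :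
    zext (hcat X R) a b = zext R a (b - n) := by
  simp only [zext, hcat, Matrix.of_apply]
  split_ifs with h1 h2 h3 h4 <;> first
  | omega
  | rfl
  | (congr 1 <;> simp [Fin.ext_iff] <;> omega)

lemma sum_delta2 {N1 N2 : ℕ} (m : ℕ) (Z : Matrix (Fin N1) (Fin N2) ℂ) (c : ℂ) (v1 v2 : ℤ) :
    (∑ u1 : Fin N1, ∑ u2 : Fin N2, (c * conj (Z u1 u2)) *
      ((if ((u1:ℕ):ℤ) = v1 then (m:ℂ) else 0) * (if ((u2:ℕ):ℤ) = v2 then (m:ℂ) else 0)))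
    = (m:ℂ)^2 * (c * conj (zext Z v1 v2)) := by
  by_cases hv : 0 ≤ v1 ∧ v1 < (N1:ℤ) ∧ 0 ≤ v2 ∧ v2 < (N2:ℤ)
  · rw [zext, dif_pos hv]
    rw [Finset.sum_eq_single (⟨v1.toNat, by omega⟩ : Fin N1)]
    · rw [Finset.sum_eq_single (⟨v2.toNat, by omega⟩ : Fin N2)]
      · have e1 : ((v1.toNat:ℕ):ℤ) = v1 := by omega
        have e2 : ((v2.toNat:ℕ):ℤ) = v2 := by omega
        simp only [Fin.val_mk, e1, e2, if_true]
        ring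
      · intro u _ hu
        have h : ¬(((u:ℕ):ℤ) = v2) := fun he => hu (Fin.ext (by simp; omega))
        rw [if_neg h, mul_zero, mul_zero]
      · simp
    · intro u _ hu
      apply Finset.sum_eq_zero
      intro u2 _
      have h : ¬(((u:ℕ):ℤ) = v1) := fun he => hu (Fin.ext (by simp; omega))
      rw [if_neg h, zero_mul, mul_zero]
    · simp
  · rw [zext, dif_neg hv, map_zero, mul_zero, mul_zero]
    apply Finset.sum_eq_zero; intro u1 _
    apply Finset.sum_eq_zero; intro u2 _
    have h1 := u1.isLt
    have h2 := u2.isLt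
    by_cases ha : ((u1:ℕ):ℤ) = v1
    · by_cases hb : ((u2:ℕ):ℤ) = v2
      · omega
      · rw [if_neg hb, mul_zero, mul_zero]
    · rw [if_neg ha, zero_mul, mul_zero]
lemma crossCorr_range {n1 n2 : ℕ} (X1 X2 : Matrix (Fin n1) (Fin n2) ℂ) (s1 s2 : ℤ) :
    crossCorr X1 X2 s1 s2 = ∑ i ∈ Finset.range n1, ∑ j ∈ Finset.range n2,
      zext X1 (i:ℤ) (j:ℤ) * conj (zext X2 ((i:ℤ) - s1) ((j:ℤ) - s2)) := by
  rw [crossCorr,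
    ← Fin.sum_univ_eq_sum_range (fun i => ∑ j ∈ Finset.range n2,
      zext X1 (i:ℤ) (j:ℤ) * conj (zext X2 ((i:ℤ) - s1) ((j:ℤ) - s2))) n1]
  apply Finset.sum_congr rfl
  intro t1 _
  rw [← Fin.sum_univ_eq_sum_range (fun j =>
      zext X1 ((t1:ℕ):ℤ) (j:ℤ) * conj (zext X2 (((t1:ℕ):ℤ) - s1) ((j:ℤ) - s2))) n2]
  apply Finset.sum_congr rfl
  intro t2 _
  rw [zext_coe]

lemma crossCorr_hcat {n : ℕ} (X R : Matrix (Fin n) (Fin n) ℂ) (s1 s2 : ℤ)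
    (hs2 : s2 ≤ -(n:ℤ)) :
    crossCorr (hcat X R) (hcat X R) s1 s2 = crossCorr X R s1 (s2 + n) := by
  rw [crossCorr_range, crossCorr_range]
  apply Finset.sum_congr rfl
  intro i hi
  have hsplit : ∑ j ∈ Finset.range (2*n), zext (hcat X R) (i:ℤ) (j:ℤ) *
      conj (zext (hcat X R) ((i:ℤ) - s1) ((j:ℤ) - s2))
      = ∑ j ∈ Finset.range n, zext (hcat X R) (i:ℤ) (j:ℤ) *
      conj (zext (hcat X R) ((i:ℤ) - s1) ((j:ℤ) - s2)) := by
    rw [Finset.range_eq_Ico,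
      ← Finset.sum_Ico_consecutive _ (Nat.zero_le n) (by omega : n ≤ 2*n)]
    have h2 : ∀ j ∈ Finset.Ico n (2*n), zext (hcat X R) (i:ℤ) (j:ℤ) *
        conj (zext (hcat X R) ((i:ℤ) - s1) ((j:ℤ) - s2)) = 0 := by
      intro j hj
      rw [Finset.mem_Ico] at hj
      rw [zext_zero (hcat X R) ((i:ℤ) - s1) ((j:ℤ) - s2) (by omega), map_zero, mul_zero]
    rw [Finset.sum_eq_zero h2, add_zero, ← Finset.range_eq_Ico]
  rw [hsplit]
  apply Finset.sum_congr rfl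
  intro j hj
  rw [Finset.mem_range] at hj
  rw [zext_hcat_left X R _ _ (by omega), zext_hcat_right X R _ _ (by omega),
    (by ring : (j:ℤ) - s2 - (n:ℤ) = (j:ℤ) - (s2 + (n:ℤ)))]

lemma vec_quadCC {n : ℕ} (X R : Matrix (Fin n) (Fin n) ℂ) (p : Fin n × Fin n) :
    quadCC X R p.2 p.1 = ∑ q : Fin n × Fin n, MR R p q * X q.2 q.1 := by
  rw [quadCC, Fintype.sum_prod_type, Finset.sum_comm]
  simp only [Matrix.of_apply, crossCorr, MR]
  apply Finset.sum_congr rfl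
  intro t1 _
  apply Finset.sum_congr rfl
  intro t2 _
  rw [(by ring : ((t1:ℕ):ℤ) - (((p.2:ℕ):ℤ) - ((n:ℤ) - 1)) = ((t1:ℕ):ℤ) - ((p.2:ℕ):ℤ) + ((n:ℤ) - 1)),
    (by ring : ((t2:ℕ):ℤ) - (((p.1:ℕ):ℤ) - ((n:ℤ) - 1)) = ((t2:ℕ):ℤ) - ((p.1:ℕ):ℤ) + ((n:ℤ) - 1)),
    mul_comm]
lemma MR_diag {n : ℕ} (hn : 1 ≤ n) (R : Matrix (Fin n) (Fin n) ℂ) (p : Fin n × Fin n) :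
    MR R p p = conj (R ⟨n - 1, by omega⟩ ⟨n - 1, by omega⟩) := by
  rw [MR]
  simp only [Matrix.of_apply, sub_self, zero_add]
  rw [zext, dif_pos ⟨by omega, by omega, by omega, by omega⟩]
  congr 2 <;> simp [Fin.ext_iff] <;> omega

lemma MR_det_ne_zero {n : ℕ} (hn : 1 ≤ n) (R : Matrix (Fin n) (Fin n) ℂ)
    (hR : R ⟨n - 1, by omega⟩ ⟨n - 1, by omega⟩ ≠ 0) : (MR R).det ≠ 0 := by
  classical
  rw [← Matrix.det_submatrix_equiv_self finProdFinEquiv.symm (MR R)]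
  have htri : ((MR R).submatrix finProdFinEquiv.symm finProdFinEquiv.symm).BlockTriangular
      OrderDual.toDual := by
    intro i j hij
    have hij' : (i : ℕ) < (j : ℕ) := hij
    simp only [Matrix.submatrix_apply]
    set p := finProdFinEquiv.symm i with hp
    set q := finProdFinEquiv.symm j with hq
    have hi : (i : ℕ) = (p.2 : ℕ) + n * (p.1 : ℕ) := by
      have := congrArg Fin.val (finProdFinEquiv.apply_symm_apply i)
      simpa [finProdFinEquiv, hp] using this.symm
    have hj : (j : ℕ) = (q.2 : ℕ) + n * (q.1 : ℕ) := by
      have := congrArg Fin.val (finProdFinEquiv.apply_symm_apply j)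
      simpa [finProdFinEquiv, hq] using this.symm
    rw [MR]
    simp only [Matrix.of_apply]
    rw [zext_zero, map_zero]
    have h1 := p.1.isLt
    have h2 := p.2.isLt
    have h3 := q.1.isLt
    have h4 := q.2.isLt
    rintro ⟨a, b, c, d⟩
    -- q.2 ≤ p.2 and q.1 ≤ p.1, contradicting i < j
    have e1 : (q.2 : ℕ) ≤ (p.2 : ℕ) := by omega
    have e2 : (q.1 : ℕ) ≤ (p.1 : ℕ) := by omega
    nlinarith [hij', hi, hj]
  rw [Matrix.det_of_lowerTriangular _ htri]
  apply Finset.prod_ne_zero_iff.mpr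
  intro i _
  simp only [Matrix.submatrix_apply]
  rw [MR_diag hn R]
  simpa using hR
lemma eC_combine (m : ℕ) (a b c d e f : ℤ) (w1 w2 : ℂ) (h : a + b + c + d = e + f) :
    (eC m a * eC m b) * ((w1 * eC m c) * (w2 * eC m d)) = (w1 * w2) * (eC m e * eC m f) := by
  have key : ∀ x y : ℤ, eC m x * eC m y = eC m (x + y) := fun x y => (eC_add m x y).symm
  calc (eC m a * eC m b) * ((w1 * eC m c) * (w2 * eC m d))
      = (w1 * w2) * (eC m a * eC m b * eC m c * eC m d) := by ring
    _ = (w1 * w2) * eC m (a + b + c + d) := by rw [key, key, key]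
    _ = (w1 * w2) * (eC m e * eC m f) := by rw [h, ← key]

lemma key_lemma {n m : ℕ} (hn : 1 ≤ n) (hm : 4 * n - 1 ≤ m)
    (X R : Matrix (Fin n) (Fin n) ℂ) (Y : Fin m → Fin m → ℝ)
    (hY : ∀ k1 k2 : Fin m,
      Y k1 k2 = ‖dft2 m m (hcat X R) (k1 : ℕ) (k2 : ℕ)‖ ^ 2)
    (r : Fin n × Fin n) :
    ∑ q : Fin m × Fin m, (P2FRA n m ⊗ₖ P1FLA n m) r q * ((Y q.2 q.1 : ℝ) : ℂ)
      = (m : ℂ) ^ 2 * quadCC X R r.2 r.1 := by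
  have hm0 : 0 < m := by omega
  set Z := hcat X R with hZ
  set s1 : ℤ := ((r.2 : ℕ) : ℤ) - ((n : ℤ) - 1) with hs1
  set s2 : ℤ := ((r.1 : ℕ) : ℤ) - (2 * (n : ℤ) - 1) with hs2
  have step1 : ∀ q : Fin m × Fin m,
      (P2FRA n m ⊗ₖ P1FLA n m) r q * ((Y q.2 q.1 : ℝ) : ℂ)
      = ∑ T : (Fin n × Fin (2*n)) × (Fin n × Fin (2*n)),
          (Z T.1.1 T.1.2 * conj (Z T.2.1 T.2.2)) *
            (eC m ((q.2 : ℕ) * (((T.2.1 : ℕ) : ℤ) - (((T.1.1 : ℕ) : ℤ) - s1))) *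
             eC m ((q.1 : ℕ) * (((T.2.2 : ℕ) : ℤ) - (((T.1.2 : ℕ) : ℤ) - s2)))) := by
    rintro ⟨q1, q2⟩
    have hK : (P2FRA n m ⊗ₖ P1FLA n m) r (q1, q2)
        = eC m ((q1 : ℕ) * s2) * eC m ((q2 : ℕ) * s1) := by
      simp only [Matrix.kroneckerMap_apply, P2FRA, P1FLA, Matrix.of_apply, eC]
      rw [hs1, hs2]
      congr 1 <;> (congr 1; push_cast; ring)
    have hdft : dft2 m m Z (q2 : ℕ) (q1 : ℕ) = ∑ t : Fin n × Fin (2*n),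
        Z t.1 t.2 * eC m (-(((t.1 : ℕ) : ℤ) * ((q2 : ℕ) : ℤ) + ((t.2 : ℕ) : ℤ) * ((q1 : ℕ) : ℤ))) := by
      rw [dft2, Fintype.sum_prod_type]
      apply Finset.sum_congr rfl; intro t1 _
      apply Finset.sum_congr rfl; intro t2 _
      congr 1
      rw [eC]
      congr 1
      push_cast
      ring
    have hconj : conj (dft2 m m Z (q2 : ℕ) (q1 : ℕ)) = ∑ u : Fin n × Fin (2*n),
        conj (Z u.1 u.2) * eC m (((u.1 : ℕ) : ℤ) * ((q2 : ℕ) : ℤ) + ((u.2 : ℕ) : ℤ) * ((q1 : ℕ) : ℤ)) := by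
      rw [hdft, map_sum]
      apply Finset.sum_congr rfl; intro u _
      rw [_root_.map_mul, eC_conj, neg_neg]
    have hYc : ((Y q2 q1 : ℝ) : ℂ) = dft2 m m Z (q2 : ℕ) (q1 : ℕ) * conj (dft2 m m Z (q2 : ℕ) (q1 : ℕ)) := by
      rw [hY q2 q1, Complex.sq_norm, Complex.mul_conj]
    show (P2FRA n m ⊗ₖ P1FLA n m) r (q1, q2) * ((Y q2 q1 : ℝ) : ℂ) = _
    rw [hK, hYc, hconj, hdft, Finset.sum_mul_sum]
    simp only [Finset.mul_sum]
    conv_rhs => rw [Fintype.sum_prod_type]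
    apply Finset.sum_congr rfl; intro t _
    apply Finset.sum_congr rfl; intro u _
    exact eC_combine m _ _ _ _ _ _ _ _ (by push_cast; ring)
  calc ∑ q : Fin m × Fin m, (P2FRA n m ⊗ₖ P1FLA n m) r q * ((Y q.2 q.1 : ℝ) : ℂ)
      = ∑ q : Fin m × Fin m, ∑ T : (Fin n × Fin (2*n)) × (Fin n × Fin (2*n)),
          (Z T.1.1 T.1.2 * conj (Z T.2.1 T.2.2)) *
            (eC m ((q.2 : ℕ) * (((T.2.1 : ℕ) : ℤ) - (((T.1.1 : ℕ) : ℤ) - s1))) *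
             eC m ((q.1 : ℕ) * (((T.2.2 : ℕ) : ℤ) - (((T.1.2 : ℕ) : ℤ) - s2)))) :=
        Finset.sum_congr rfl fun q _ => step1 q
    _ = ∑ T : (Fin n × Fin (2*n)) × (Fin n × Fin (2*n)), ∑ q : Fin m × Fin m,
          (Z T.1.1 T.1.2 * conj (Z T.2.1 T.2.2)) *
            (eC m ((q.2 : ℕ) * (((T.2.1 : ℕ) : ℤ) - (((T.1.1 : ℕ) : ℤ) - s1))) *
             eC m ((q.1 : ℕ) * (((T.2.2 : ℕ) : ℤ) - (((T.1.2 : ℕ) : ℤ) - s2)))) :=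
        Finset.sum_comm
    _ = ∑ T : (Fin n × Fin (2*n)) × (Fin n × Fin (2*n)),
          (Z T.1.1 T.1.2 * conj (Z T.2.1 T.2.2)) *
            ((if (((T.2.1 : ℕ) : ℤ) - (((T.1.1 : ℕ) : ℤ) - s1)) = 0 then (m:ℂ) else 0) *
             (if (((T.2.2 : ℕ) : ℤ) - (((T.1.2 : ℕ) : ℤ) - s2)) = 0 then (m:ℂ) else 0)) := by
        apply Finset.sum_congr rfl; intro T _
        rw [← Finset.mul_sum]
        congr 1
        rw [Fintype.sum_prod_type, Finset.sum_comm, ← sum_eC m hm0 _ ?hb1, ← sum_eC m hm0 _ ?hb2,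
          Finset.sum_mul_sum]
        case hb1 =>
          have h1 := T.1.1.isLt; have h2 := T.2.1.isLt; have h3 := r.2.isLt
          rw [hs1]; omega
        case hb2 =>
          have h1 := T.1.2.isLt; have h2 := T.2.2.isLt; have h3 := r.1.isLt
          rw [hs2]; omega
    _ = ∑ t1 : Fin n, ∑ t2 : Fin (2*n), ∑ u1 : Fin n, ∑ u2 : Fin (2*n),
          (Z t1 t2 * conj (Z u1 u2)) *
            ((if ((u1 : ℕ) : ℤ) = ((t1 : ℕ) : ℤ) - s1 then (m:ℂ) else 0) *
             (if ((u2 : ℕ) : ℤ) = ((t2 : ℕ) : ℤ) - s2 then (m:ℂ) else 0)) := by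
        simp only [Fintype.sum_prod_type, sub_eq_zero]
    _ = ∑ t1 : Fin n, ∑ t2 : Fin (2*n),
          (m:ℂ)^2 * (Z t1 t2 * conj (zext Z (((t1 : ℕ) : ℤ) - s1) (((t2 : ℕ) : ℤ) - s2))) := by
        apply Finset.sum_congr rfl; intro t1 _
        apply Finset.sum_congr rfl; intro t2 _
        exact sum_delta2 m Z (Z t1 t2) _ _
    _ = (m : ℂ) ^ 2 * crossCorr Z Z s1 s2 := by
        rw [crossCorr, Finset.mul_sum]
        apply Finset.sum_congr rfl; intro t1 _
        rw [Finset.mul_sum]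
    _ = (m : ℂ) ^ 2 * quadCC X R r.2 r.1 := by
        rw [hZ, crossCorr_hcat X R s1 s2 (by rw [hs2]; have := r.1.isLt; omega), quadCC]
        simp only [Matrix.of_apply]
        rw [hs1, hs2, (by ring : ((r.1 : ℕ) : ℤ) - (2 * (n : ℤ) - 1) + (n : ℤ) = ((r.1 : ℕ) : ℤ) - ((n : ℤ) - 1))]


/-- Referenced deconvolution exactly recovers `X` from the squared Fourier
magnitude data `Y` of the composite signal `[X,R]`: `vec(X) = T_R · vec(Y)`. -/
theorem referenced_deconvolution_exact_recovery
    (n m : ℕ) (hn : 1 ≤ n) (hm : 4 * n - 1 ≤ m)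
    (X R : Matrix (Fin n) (Fin n) ℂ)
    (hR : R ⟨n - 1, by omega⟩ ⟨n - 1, by omega⟩ ≠ 0)
    (Y : Fin m → Fin m → ℝ)
    (hY : ∀ k1 k2 : Fin m,
      Y k1 k2 = ‖dft2 m m (hcat X R) (k1 : ℕ) (k2 : ℕ)‖ ^ 2) :
    ∀ p : Fin n × Fin n,
      X p.2 p.1 = ∑ q : Fin m × Fin m, TR m R p q * ((Y q.2 q.1 : ℝ) : ℂ) := by
  intro p
  have hm0 : 0 < m := by omega
  have hm2 : ((m : ℂ) ^ 2) ≠ 0 := pow_ne_zero 2 (Nat.cast_ne_zero.mpr hm0.ne')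
  have hdet := MR_det_ne_zero hn R hR
  have hinv : (MR R)⁻¹ * MR R = 1 := Matrix.nonsing_inv_mul _ (isUnit_iff_ne_zero.mpr hdet)
  have main : ∑ q : Fin m × Fin m,
      (∑ w : Fin n × Fin n, (MR R)⁻¹ p w * (P2FRA n m ⊗ₖ P1FLA n m) w q) * ((Y q.2 q.1 : ℝ) : ℂ)
      = (m : ℂ) ^ 2 * X p.2 p.1 := by
    calc ∑ q : Fin m × Fin m,
        (∑ w : Fin n × Fin n, (MR R)⁻¹ p w * (P2FRA n m ⊗ₖ P1FLA n m) w q) * ((Y q.2 q.1 : ℝ) : ℂ)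
        = ∑ q : Fin m × Fin m, ∑ w : Fin n × Fin n,
            (MR R)⁻¹ p w * ((P2FRA n m ⊗ₖ P1FLA n m) w q * ((Y q.2 q.1 : ℝ) : ℂ)) := by
          apply Finset.sum_congr rfl; intro q _
          rw [Finset.sum_mul]
          apply Finset.sum_congr rfl; intro w _
          rw [mul_assoc]
      _ = ∑ w : Fin n × Fin n, ∑ q : Fin m × Fin m,
            (MR R)⁻¹ p w * ((P2FRA n m ⊗ₖ P1FLA n m) w q * ((Y q.2 q.1 : ℝ) : ℂ)) :=
          Finset.sum_comm
      _ = ∑ w : Fin n × Fin n, (MR R)⁻¹ p w * ((m : ℂ) ^ 2 * quadCC X R w.2 w.1) := by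
          apply Finset.sum_congr rfl; intro w _
          rw [← Finset.mul_sum, key_lemma hn hm X R Y hY w]
      _ = (m : ℂ) ^ 2 * ∑ w : Fin n × Fin n, (MR R)⁻¹ p w * quadCC X R w.2 w.1 := by
          rw [Finset.mul_sum]
          apply Finset.sum_congr rfl; intro w _
          ring
      _ = (m : ℂ) ^ 2 * ∑ w : Fin n × Fin n, ∑ s : Fin n × Fin n,
            (MR R)⁻¹ p w * (MR R w s * X s.2 s.1) := by
          congr 1
          apply Finset.sum_congr rfl; intro w _
          rw [vec_quadCC X R w, Finset.mul_sum]
      _ = (m : ℂ) ^ 2 * ∑ s : Fin n × Fin n,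
            (∑ w : Fin n × Fin n, (MR R)⁻¹ p w * MR R w s) * X s.2 s.1 := by
          rw [Finset.sum_comm]
          congr 1
          apply Finset.sum_congr rfl; intro s _
          rw [Finset.sum_mul]
          apply Finset.sum_congr rfl; intro w _
          rw [mul_assoc]
      _ = (m : ℂ) ^ 2 * X p.2 p.1 := by
          congr 1
          have h1 : ∀ s : Fin n × Fin n, ∑ w : Fin n × Fin n, (MR R)⁻¹ p w * MR R w s
              = (1 : Matrix (Fin n × Fin n) (Fin n × Fin n) ℂ) p s := by
            intro s
            rw [← hinv, Matrix.mul_apply]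
          simp only [h1, Matrix.one_apply]
          simp
  calc X p.2 p.1 = ((m : ℂ) ^ 2)⁻¹ * ((m : ℂ) ^ 2 * X p.2 p.1) := by
        rw [inv_mul_cancel_left₀ hm2]
    _ = ∑ q : Fin m × Fin m, TR m R p q * ((Y q.2 q.1 : ℝ) : ℂ) := by
        rw [← main, Finset.mul_sum]
        apply Finset.sum_congr rfl; intro q _
        rw [TR, Matrix.smul_apply, Matrix.mul_apply, smul_eq_mul, mul_assoc]
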